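/- arXiv:2510.17337 — 2 statements merged into one kernel-verified Lean document; each statement's English description precedes it below -/
import Mathlib

section
/- Let D be a (4n−1, 2n−1, n−1) difference set in a finite abelian group G (Paley type). Then D×D ∪ (D̄×D̄ minus its diagonal) ⊆ G², where D̄ = G∖D, is a difference set of propriety 3 with parameters (4n−1, (4n−1)(2n−1), (4n−1)(n−1)). -/
open Finset

/-- A (v,k,lam) difference set in a group G of order v. -/
def IsDiffSet (G : Type*) [CommGroup G] [Fintype G] [DecidableEq G]
    (v k lam : ℕ) (D : Finset G) : Prop :=
  Fintype.card G = v ∧ D.card = k ∧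
  ∀ g : G, g ≠ 1 → ((D ×ˢ D).filter fun p => p.1 * p.2⁻¹ = g).card = lam

/-- A (v,k,lam) difference set of propriety 3. -/
def IsPropDS3 (G : Type*) [CommGroup G] [Fintype G] [DecidableEq G]
    (v k lam : ℕ) (D : Finset (G × G)) : Prop :=
  Fintype.card G = v ∧ D.card = k ∧
  ∀ g : G, g ≠ 1 →
    (((D ×ˢ D).filter fun p => p.1.1⁻¹ * p.2.1 = g ∧ p.1.2⁻¹ * p.2.2 = g).card = lam ∧
     ((D ×ˢ D).filter fun p => p.1.1 * p.2.1⁻¹ = g ∧ p.1.2 = p.2.2).card = lam ∧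
     ((D ×ˢ D).filter fun p => p.1.1 = p.2.1 ∧ p.1.2 * p.2.2⁻¹ = g).card = lam)

/- ---------- Auxiliary lemmas ---------- -/

lemma aux_mul_inv_iff {G : Type*} [CommGroup G] {a b g : G} :
    a * b⁻¹ = g ↔ b = a * g⁻¹ := by
  rw [mul_inv_eq_iff_eq_mul]
  constructor <;> intro h
  · rw [h, mul_comm g b, mul_inv_cancel_right]
  · rw [h, mul_comm g, inv_mul_cancel_right]

lemma aux_card_filter_prod {α β : Type*} (A : Finset α) (B : Finset β)
    (P : α × β → Prop) [DecidablePred P] :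
    ((A ×ˢ B).filter P).card = ∑ a ∈ A, (B.filter fun b => P (a, b)).card := by
  rw [Finset.card_filter, Finset.sum_product]
  exact Finset.sum_congr rfl fun a _ => (Finset.card_filter _ _).symm

lemma aux_card_filter_prod' {α β : Type*} (A : Finset α) (B : Finset β)
    (P : α × β → Prop) [DecidablePred P] :
    ((A ×ˢ B).filter P).card = ∑ b ∈ B, (A.filter fun a => P (a, b)).card := by
  rw [Finset.card_filter, Finset.sum_product_right]
  exact Finset.sum_congr rfl fun b _ => (Finset.card_filter _ _).symm

lemma aux_card_pair {G : Type*} [DecidableEq G] [Fintype G] (E : Finset (G × G))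
    (f : G × G → G × G) (P : (G × G) × (G × G) → Prop) [DecidablePred P]
    (hP : ∀ p : (G × G) × (G × G), P p ↔ p.2 = f p.1) :
    ((E ×ˢ E).filter P).card
      = (((univ : Finset G) ×ˢ (univ : Finset G)).filter
          fun q : G × G => q ∈ E ∧ f q ∈ E).card := by
  refine Finset.card_bij' (fun p _ => p.1) (fun q _ => (q, f q)) ?_ ?_ ?_ ?_
  · intro p hp
    simp only [mem_filter, mem_product] at hp ⊢
    obtain ⟨⟨h1, h2⟩, hc⟩ := hp
    rw [hP] at hc
    exact ⟨⟨mem_univ _, mem_univ _⟩, h1, hc ▸ h2⟩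
  · intro q hq
    simp only [mem_filter, mem_product] at hq ⊢
    exact ⟨⟨hq.2.1, hq.2.2⟩, (hP _).mpr rfl⟩
  · intro p hp
    simp only [mem_filter, mem_product] at hp
    exact Prod.ext rfl ((hP p).mp hp.2).symm
  · intro q hq
    rfl

theorem stmt13 {G : Type*} [CommGroup G] [Fintype G] [DecidableEq G]
    (n : ℕ) (hn : 0 < n) (D : Finset G)
    (hD : IsDiffSet G (4 * n - 1) (2 * n - 1) (n - 1) D) :
    IsPropDS3 G (4 * n - 1) ((4 * n - 1) * (2 * n - 1)) ((4 * n - 1) * (n - 1))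
      ((D ×ˢ D) ∪ ((Dᶜ ×ˢ Dᶜ).filter fun p => p.1 ≠ p.2)) := by
  obtain ⟨hv, hk, hlam⟩ := hD
  set E := (D ×ˢ D) ∪ ((Dᶜ ×ˢ Dᶜ).filter fun p => p.1 ≠ p.2) with hE
  have memE : ∀ a b : G, (a, b) ∈ E ↔
      ((a ∈ D ∧ b ∈ D) ∨ (a ∉ D ∧ b ∉ D ∧ a ≠ b)) := by
    intro a b
    simp only [hE, mem_union, mem_product, mem_filter, mem_compl]
    tauto
  have hcu : (univ : Finset G).card = 4 * n - 1 := by rw [Finset.card_univ, hv]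
  have hkc : Dᶜ.card = 2 * n := by rw [Finset.card_compl, hv, hk]; omega
  have hfD : (univ.filter fun x => x ∈ D).card = 2 * n - 1 := by
    rw [Finset.filter_univ_mem, hk]
  -- basic counts
  have LA : ∀ g : G, g ≠ 1 →
      (univ.filter fun x => x ∈ D ∧ x * g ∈ D).card = n - 1 := by
    intro g hg
    rw [← hlam g hg]
    refine Finset.card_bij' (fun x _ => (x * g, x)) (fun p _ => p.2) ?_ ?_ ?_ ?_
    · intro x hx
      simp only [mem_filter, mem_univ, true_and] at hx
      simp only [mem_filter, mem_product]
      exact ⟨⟨hx.2, hx.1⟩, by rw [mul_comm x g, mul_inv_cancel_right]⟩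
    · intro p hp
      simp only [mem_filter, mem_product] at hp
      simp only [mem_filter, mem_univ, true_and]
      obtain ⟨⟨h1, h2⟩, hc⟩ := hp
      rw [aux_mul_inv_iff] at hc
      have h3 : p.2 * g = p.1 := by rw [hc, inv_mul_cancel_right]
      exact ⟨h2, h3 ▸ h1⟩
    · intro x hx; rfl
    · intro p hp
      simp only [mem_filter, mem_product] at hp
      obtain ⟨⟨h1, h2⟩, hc⟩ := hp
      rw [aux_mul_inv_iff] at hc
      have h3 : p.2 * g = p.1 := by rw [hc, inv_mul_cancel_right]
      exact Prod.ext h3 rfl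
  have Lshift : ∀ g : G, (univ.filter fun x => x * g ∈ D).card = 2 * n - 1 := by
    intro g
    rw [← hk]
    refine Finset.card_bij' (fun x _ => x * g) (fun y _ => y * g⁻¹) ?_ ?_ ?_ ?_
    · intro x hx
      simp only [mem_filter, mem_univ, true_and] at hx
      exact hx
    · intro y hy
      simp only [mem_filter, mem_univ, true_and]
      rwa [inv_mul_cancel_right]
    · intro x hx
      exact mul_inv_cancel_right x g
    · intro y hy
      exact inv_mul_cancel_right y g
  have swapf : ∀ (p q : G → Prop) [DecidablePred p] [DecidablePred q],
      (univ.filter fun x => p x ∧ q x) = (univ.filter fun x => q x ∧ p x) := by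
    intro p q _ _
    exact Finset.filter_congr fun x _ => and_comm
  have LB : ∀ g : G, g ≠ 1 →
      (univ.filter fun x => x ∈ D ∧ x * g ∉ D).card = n := by
    intro g hg
    have h1 := Finset.card_filter_add_card_filter_not
      (s := univ.filter fun x => x ∈ D) (fun x => x * g ∈ D)
    rw [Finset.filter_filter, Finset.filter_filter, LA g hg, hfD] at h1
    omega
  have LC : ∀ g : G, g ≠ 1 →
      (univ.filter fun x => x ∉ D ∧ x * g ∈ D).card = n := by
    intro g hg
    have h1 := Finset.card_filter_add_card_filter_not
      (s := univ.filter fun x => x * g ∈ D) (fun x => x ∈ D)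
    rw [Finset.filter_filter, Finset.filter_filter, Lshift g,
      swapf (fun x => x * g ∈ D) (fun x => x ∈ D), LA g hg,
      swapf (fun x => x * g ∈ D) (fun x => x ∉ D)] at h1
    omega
  have LD : ∀ g : G, g ≠ 1 →
      (univ.filter fun x => x ∉ D ∧ x * g ∉ D).card = n := by
    intro g hg
    have h0 := Finset.card_filter_add_card_filter_not
      (s := (univ : Finset G)) (fun x => x ∈ D)
    rw [hfD, hcu] at h0
    have h1 := Finset.card_filter_add_card_filter_not
      (s := univ.filter fun x => x ∉ D) (fun x => x * g ∈ D)
    rw [Finset.filter_filter, Finset.filter_filter, LC g hg] at h1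
    omega
  -- fiber lemma for condition 1
  have fiber1 : ∀ g : G, g ≠ 1 → ∀ x : G,
      (univ.filter fun y => (x, y) ∈ E ∧ (x * g, y * g) ∈ E).card = n - 1 := by
    intro g hg x
    have hcan : ∀ y : G, x * g = y * g ↔ x = y := fun y => mul_left_inj g
    by_cases h1 : x ∈ D <;> by_cases h2 : x * g ∈ D
    · rw [Finset.filter_congr (q := fun y => y ∈ D ∧ y * g ∈ D)
        (fun y _ => by rw [memE, memE]; tauto)]
      exact LA g hg
    · rw [Finset.filter_congr (q := fun y => (y ∈ D ∧ y * g ∉ D) ∧ y ≠ x)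
        (fun y _ => by
          rw [memE, memE]
          have h3 := not_congr (hcan y)
          have h4 : (x = y) ↔ (y = x) := eq_comm
          tauto)]
      rw [← Finset.filter_filter, Finset.filter_ne', Finset.card_erase_of_mem
        (by simp only [mem_filter, mem_univ, true_and]; exact ⟨h1, h2⟩), LB g hg]
    · rw [Finset.filter_congr (q := fun y => (y ∉ D ∧ y * g ∈ D) ∧ y ≠ x)
        (fun y _ => by
          rw [memE, memE]
          have h3 := not_congr (hcan y)
          have h4 : (x = y) ↔ (y = x) := eq_comm
          tauto)]
      rw [← Finset.filter_filter, Finset.filter_ne', Finset.card_erase_of_mem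
        (by simp only [mem_filter, mem_univ, true_and]; exact ⟨h1, h2⟩), LC g hg]
    · rw [Finset.filter_congr (q := fun y => (y ∉ D ∧ y * g ∉ D) ∧ y ≠ x)
        (fun y _ => by
          rw [memE, memE]
          have h3 := not_congr (hcan y)
          have h4 : (x = y) ↔ (y = x) := eq_comm
          tauto)]
      rw [← Finset.filter_filter, Finset.filter_ne', Finset.card_erase_of_mem
        (by simp only [mem_filter, mem_univ, true_and]; exact ⟨h1, h2⟩), LD g hg]
  -- fiber lemmas for conditions 2 and 3 (generic in the two "row" elements u, v)
  have fiberTT : ∀ u v : G, u ∈ D → v ∈ D →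
      (univ.filter fun y => (u, y) ∈ E ∧ (v, y) ∈ E).card = 2 * n - 1 := by
    intro u v hu hv
    rw [Finset.filter_congr (q := fun y => y ∈ D)
      (fun y _ => by rw [memE, memE]; tauto), Finset.filter_univ_mem, hk]
  have fiberMixed : ∀ u v : G, ¬ (u ∈ D ∧ v ∈ D) → ¬ (u ∉ D ∧ v ∉ D) →
      (univ.filter fun y => (u, y) ∈ E ∧ (v, y) ∈ E).card = 0 := by
    intro u v hu hv
    rw [Finset.filter_false_of_mem (fun y _ => by rw [memE, memE]; tauto)]
    exact Finset.card_empty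
  have fiberFF : ∀ u v : G, u ∉ D → v ∉ D → u ≠ v →
      (univ.filter fun y => (u, y) ∈ E ∧ (v, y) ∈ E).card = 2 * n - 2 := by
    intro u v hu hv huv
    have heq : (univ.filter fun y => (u, y) ∈ E ∧ (v, y) ∈ E)
        = (Dᶜ.erase u).erase v := by
      ext y
      simp only [mem_erase, mem_compl, mem_filter, mem_univ, true_and]
      rw [memE, memE]
      have h4 : (u = y) ↔ (y = u) := eq_comm
      have h5 : (v = y) ↔ (y = v) := eq_comm
      tauto
    rw [heq, Finset.card_erase_of_mem (by
        rw [mem_erase, mem_compl]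
        exact ⟨fun h => huv h.symm, hv⟩),
      Finset.card_erase_of_mem (by rwa [mem_compl]), hkc]
    omega
  -- the common sum for conditions 2 and 3
  have sum23 : ∀ g : G, g ≠ 1 →
      ∑ u ∈ (univ : Finset G), (univ.filter fun y => (u, y) ∈ E ∧ (u * g⁻¹, y) ∈ E).card
        = (4 * n - 1) * (n - 1) := by
    intro g hg
    have hg' : g⁻¹ ≠ 1 := fun h => hg (inv_eq_one.mp h)
    have s1 : ∑ u ∈ univ.filter fun u => u ∈ D ∧ u * g⁻¹ ∈ D,
        (univ.filter fun y => (u, y) ∈ E ∧ (u * g⁻¹, y) ∈ E).card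
        = (n - 1) * (2 * n - 1) := by
      rw [Finset.sum_congr rfl (fun u hu => by
        simp only [mem_filter, mem_univ, true_and] at hu
        exact fiberTT u (u * g⁻¹) hu.1 hu.2), Finset.sum_const, smul_eq_mul, LA g⁻¹ hg']
    have s2 : ∑ u ∈ univ.filter fun u => ¬(u ∈ D ∧ u * g⁻¹ ∈ D) ∧ (u ∉ D ∧ u * g⁻¹ ∉ D),
        (univ.filter fun y => (u, y) ∈ E ∧ (u * g⁻¹, y) ∈ E).card
        = n * (2 * n - 2) := by
      rw [Finset.filter_congr (q := fun u => u ∉ D ∧ u * g⁻¹ ∉ D) (fun u _ => by tauto)]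
      have hne : ∀ u : G, u ≠ u * g⁻¹ := by
        intro u h
        exact hg' ((mul_eq_left.mp h.symm))
      rw [Finset.sum_congr rfl (fun u hu => by
        simp only [mem_filter, mem_univ, true_and] at hu
        exact fiberFF u (u * g⁻¹) hu.1 hu.2 (hne u)), Finset.sum_const, smul_eq_mul,
        LD g⁻¹ hg']
    have s3 : ∑ u ∈ univ.filter fun u => ¬(u ∈ D ∧ u * g⁻¹ ∈ D) ∧ ¬(u ∉ D ∧ u * g⁻¹ ∉ D),
        (univ.filter fun y => (u, y) ∈ E ∧ (u * g⁻¹, y) ∈ E).card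
        = 0 := by
      refine Finset.sum_eq_zero fun u hu => ?_
      simp only [mem_filter, mem_univ, true_and] at hu
      exact fiberMixed u (u * g⁻¹) hu.1 hu.2
    rw [← Finset.sum_filter_add_sum_filter_not (univ : Finset G)
        (fun u => u ∈ D ∧ u * g⁻¹ ∈ D)
        (fun u => (univ.filter fun y => (u, y) ∈ E ∧ (u * g⁻¹, y) ∈ E).card),
      ← Finset.sum_filter_add_sum_filter_not
        (univ.filter fun u => ¬(u ∈ D ∧ u * g⁻¹ ∈ D))
        (fun u => u ∉ D ∧ u * g⁻¹ ∉ D)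
        (fun u => (univ.filter fun y => (u, y) ∈ E ∧ (u * g⁻¹, y) ∈ E).card),
      Finset.filter_filter, Finset.filter_filter, s1, s2, s3]
    obtain ⟨m, rfl⟩ : ∃ m, n = m + 1 := ⟨n - 1, by omega⟩
    have e1 : 2 * (m + 1) - 1 = 2 * m + 1 := by omega
    have e2 : 2 * (m + 1) - 2 = 2 * m := by omega
    have e3 : 4 * (m + 1) - 1 = 4 * m + 3 := by omega
    have e4 : (m + 1) - 1 = m := by omega
    rw [e1, e2, e3, e4]
    ring
  -- cardinality of E
  have cardE : E.card = (4 * n - 1) * (2 * n - 1) := by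
    have hdis : Disjoint (D ×ˢ D) ((Dᶜ ×ˢ Dᶜ).filter fun p => p.1 ≠ p.2) := by
      rw [Finset.disjoint_left]
      intro p hp hp'
      simp only [mem_product] at hp
      simp only [mem_filter, mem_product, mem_compl] at hp'
      exact hp'.1.1 hp.1
    have hoff : ((Dᶜ ×ˢ Dᶜ).filter fun p => p.1 ≠ p.2) = Dᶜ.offDiag := by
      ext p
      simp only [Finset.mem_offDiag, mem_filter, mem_product, mem_compl]
      tauto
    rw [hE, Finset.card_union_of_disjoint hdis, Finset.card_product, hk, hoff,
      Finset.offDiag_card, hkc]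
    obtain ⟨m, rfl⟩ : ∃ m, n = m + 1 := ⟨n - 1, by omega⟩
    have e1 : 2 * (m + 1) - 1 = 2 * m + 1 := by omega
    have e3 : 4 * (m + 1) - 1 = 4 * m + 3 := by omega
    rw [e1, e3]
    have e5 : 2 * (m + 1) * (2 * (m + 1)) - 2 * (m + 1) = (2 * m + 2) * (2 * m + 1) := by
      have : 2 * (m + 1) * (2 * (m + 1)) = 2 * (m + 1) * (2 * m + 1) + 2 * (m + 1) := by ring
      rw [this, Nat.add_sub_cancel]
      ring
    rw [e5]
    ring
  refine ⟨hv, cardE, fun g hg => ⟨?_, ?_, ?_⟩⟩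
  -- condition 1
  · rw [aux_card_pair E (fun q => (q.1 * g, q.2 * g)) _
      (fun p => by
        rw [Prod.ext_iff]
        exact and_congr inv_mul_eq_iff_eq_mul inv_mul_eq_iff_eq_mul),
      aux_card_filter_prod]
    rw [Finset.sum_congr rfl (fun x _ => fiber1 g hg x), Finset.sum_const, smul_eq_mul, hcu]
  -- condition 2
  · rw [aux_card_pair E (fun q => (q.1 * g⁻¹, q.2)) _
      (fun p => by
        rw [Prod.ext_iff]
        exact and_congr aux_mul_inv_iff eq_comm),
      aux_card_filter_prod]
    exact sum23 g hg
  -- condition 3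
  · rw [aux_card_pair E (fun q => (q.1, q.2 * g⁻¹)) _
      (fun p => by
        rw [Prod.ext_iff]
        exact and_congr eq_comm aux_mul_inv_iff),
      aux_card_filter_prod']
    have hsymm : ∀ a b : G, (a, b) ∈ E ↔ (b, a) ∈ E := by
      intro a b
      rw [memE, memE]
      have : (a = b) ↔ (b = a) := eq_comm
      tauto
    have : ∀ y ∈ (univ : Finset G),
        (univ.filter fun x => (x, y) ∈ E ∧ (x, y * g⁻¹) ∈ E).card
          = (univ.filter fun x => (y, x) ∈ E ∧ (y * g⁻¹, x) ∈ E).card := by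
      intro y _
      rw [Finset.filter_congr (fun x _ => by rw [hsymm x y, hsymm x (y * g⁻¹)])]
    rw [Finset.sum_congr rfl this]
    exact sum23 g hg
end

section
/- Let D be a (4n², 2n²−n, n²−n) Hadamard difference set in a finite abelian group G, and D̄ = G∖D. Then D×D ∪ D̄×D̄ is a difference set of propriety 3 with parameters (4n², 2n²(4n²+1), 2n²(2n²+1)); moreover both (D×D minus diagonal) ∪ (D̄×D̄ minus diagonal) and (D×D̄) ∪ (D̄×D) are difference sets of propriety 3 with parameters (4n², 2n²(4n²−1), 2n²(2n²−1)). -/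
open Finset

section Tools
set_option linter.unusedSectionVars false
variable {G : Type*} [CommGroup G] [Fintype G] [DecidableEq G]

lemma iff1 (x y g : G) : x * y⁻¹ = g ↔ y = x * g⁻¹ := by
  rw [mul_inv_eq_iff_eq_mul, eq_mul_inv_iff_mul_eq, mul_comm y g]
  exact eq_comm

lemma iff2 (x y g : G) : x⁻¹ * y = g ↔ y = x * g :=
  inv_mul_eq_iff_eq_mul

lemma toolA (S T : Finset G) (f : G → G) :
    ((S ×ˢ T).filter fun q => q.2 = f q.1).card = (S.filter fun x => f x ∈ T).card := by
  apply Finset.card_nbij' (i := fun q => q.1) (j := fun x => (x, f x))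
  · intro q hq; simp only [mem_coe, mem_filter, mem_product] at hq ⊢
    exact ⟨hq.1.1, hq.2 ▸ hq.1.2⟩
  · intro x hx; simp only [mem_coe, mem_filter, mem_product] at hx ⊢; tauto
  · intro q hq; simp only [mem_coe, mem_filter, mem_product] at hq
    exact Prod.ext rfl hq.2.symm
  · intro x hx; rfl

lemma toolShift (T : Finset G) (c : G) :
    ((univ : Finset G).filter fun x => x * c ∈ T).card = T.card := by
  apply Finset.card_nbij' (i := fun x => x * c) (j := fun x => x * c⁻¹)
  · intro x hx; simpa using (mem_filter.mp hx).2
  · intro x hx; simpa using hx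
  · intro x _; simp
  · intro x _; simp

lemma toolB (S₁ T₁ S₂ T₂ : Finset G) (P Q : G → G → Prop)
    [DecidableRel P] [DecidableRel Q] :
    (((S₁ ×ˢ T₁) ×ˢ (S₂ ×ˢ T₂)).filter fun q => P q.1.1 q.2.1 ∧ Q q.1.2 q.2.2).card
      = ((S₁ ×ˢ S₂).filter fun q => P q.1 q.2).card * ((T₁ ×ˢ T₂).filter fun q => Q q.1 q.2).card := by
  rw [← Finset.card_product]
  apply Finset.card_nbij' (i := fun q => ((q.1.1, q.2.1), (q.1.2, q.2.2)))
    (j := fun r => ((r.1.1, r.2.1), (r.1.2, r.2.2)))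
  · intro q hq; simp only [mem_coe, mem_filter, mem_product] at hq ⊢; tauto
  · intro r hr; simp only [mem_coe, mem_filter, mem_product] at hr ⊢; tauto
  · intro q _; rfl
  · intro r _; rfl

lemma toolU (A B : Finset (G × G)) (hAB : Disjoint A B) (P : G × G → G × G → Prop)
    [DecidableRel P] :
    (((A ∪ B) ×ˢ (A ∪ B)).filter fun q => P q.1 q.2).card
      = ((A ×ˢ A).filter fun q => P q.1 q.2).card + ((A ×ˢ B).filter fun q => P q.1 q.2).card
        + ((B ×ˢ A).filter fun q => P q.1 q.2).card + ((B ×ˢ B).filter fun q => P q.1 q.2).card := by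
  rw [Finset.union_product, Finset.product_union, Finset.product_union,
    Finset.filter_union, Finset.filter_union, Finset.filter_union]
  rw [Finset.card_union_of_disjoint, Finset.card_union_of_disjoint, Finset.card_union_of_disjoint]
  · ring
  all_goals
    simp only [Finset.disjoint_left, mem_union, mem_filter, mem_product]
    intro q hq hq'
    have := Finset.disjoint_left.mp hAB
    tauto

lemma TC1 (S₁ T₁ S₂ T₂ : Finset G) (g : G) :
    (((S₁ ×ˢ T₁) ×ˢ (S₂ ×ˢ T₂)).filter fun q => q.1.1⁻¹ * q.2.1 = g ∧ q.1.2⁻¹ * q.2.2 = g).card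
      = (S₁.filter fun x => x * g ∈ S₂).card * (T₁.filter fun x => x * g ∈ T₂).card := by
  rw [toolB S₁ T₁ S₂ T₂ (fun a b => a⁻¹ * b = g) (fun a b => a⁻¹ * b = g)]
  rw [Finset.filter_congr (fun (q : G × G) _ => iff2 q.1 q.2 g), toolA S₁ S₂ (fun x => x * g),
      Finset.filter_congr (fun (q : G × G) _ => iff2 q.1 q.2 g), toolA T₁ T₂ (fun x => x * g)]

lemma TC2 (S₁ T₁ S₂ T₂ : Finset G) (g : G) :
    (((S₁ ×ˢ T₁) ×ˢ (S₂ ×ˢ T₂)).filter fun q => q.1.1 * q.2.1⁻¹ = g ∧ q.1.2 = q.2.2).card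
      = (S₁.filter fun x => x * g⁻¹ ∈ S₂).card * (T₁.filter fun x => x ∈ T₂).card := by
  rw [toolB S₁ T₁ S₂ T₂ (fun a b => a * b⁻¹ = g) (fun a b => a = b)]
  rw [Finset.filter_congr (fun (q : G × G) _ => iff1 q.1 q.2 g), toolA S₁ S₂ (fun x => x * g⁻¹),
      Finset.filter_congr (fun (q : G × G) (_ : q ∈ T₁ ×ˢ T₂) => (eq_comm : q.1 = q.2 ↔ q.2 = q.1)),
      toolA T₁ T₂ (fun x => x)]

lemma TC3 (S₁ T₁ S₂ T₂ : Finset G) (g : G) :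
    (((S₁ ×ˢ T₁) ×ˢ (S₂ ×ˢ T₂)).filter fun q => q.1.1 = q.2.1 ∧ q.1.2 * q.2.2⁻¹ = g).card
      = (S₁.filter fun x => x ∈ S₂).card * (T₁.filter fun x => x * g⁻¹ ∈ T₂).card := by
  rw [toolB S₁ T₁ S₂ T₂ (fun a b => a = b) (fun a b => a * b⁻¹ = g)]
  rw [Finset.filter_congr (fun (q : G × G) (_ : q ∈ S₁ ×ˢ S₂) => (eq_comm : q.1 = q.2 ↔ q.2 = q.1)),
      toolA S₁ S₂ (fun x => x),
      Finset.filter_congr (fun (q : G × G) _ => iff1 q.1 q.2 g), toolA T₁ T₂ (fun x => x * g⁻¹)]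

lemma sumCompl (S : Finset G) (p : G → Prop) [DecidablePred p] :
    (S.filter p).card + (Sᶜ.filter p).card = ((univ : Finset G).filter p).card := by
  rw [← Finset.card_union_of_disjoint (Finset.disjoint_filter_filter disjoint_compl_right),
    ← Finset.filter_union, Finset.union_compl]

lemma sumMem (S T : Finset G) (f : G → G) :
    (S.filter fun x => f x ∈ T).card + (S.filter fun x => f x ∈ Tᶜ).card = S.card := by
  have h := Finset.card_filter_add_card_filter_not (s := S) (p := fun x => f x ∈ T)
  rw [show (S.filter fun x => f x ∈ Tᶜ) = (S.filter fun a => ¬ (f a ∈ T)) from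
    Finset.filter_congr (fun x _ => by simp), h]

lemma counts (D : Finset G) (n : ℕ)
    (hv : Fintype.card G = 4 * n ^ 2) (hk : D.card = 2 * n ^ 2 - n)
    (hlam : ∀ g : G, g ≠ 1 → ((D ×ˢ D).filter fun p => p.1 * p.2⁻¹ = g).card = n ^ 2 - n)
    (hn : 0 < n) (g : G) (hg : g ≠ 1) :
    (D.filter fun x => x * g ∈ D).card = n ^ 2 - n ∧
    (D.filter fun x => x * g ∈ Dᶜ).card = n ^ 2 ∧
    (Dᶜ.filter fun x => x * g ∈ D).card = n ^ 2 ∧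
    (Dᶜ.filter fun x => x * g ∈ Dᶜ).card = n ^ 2 + n := by
  have hnm : n ≤ n ^ 2 := Nat.le_self_pow two_ne_zero n
  have hkc : Dᶜ.card = 2 * n ^ 2 + n := by
    rw [Finset.card_compl, hv, hk]; omega
  have hDD : (D.filter fun x => x * g ∈ D).card = n ^ 2 - n := by
    have h := hlam g⁻¹ (by simpa using hg)
    rw [Finset.filter_congr (fun (q : G × G) _ => iff1 q.1 q.2 g⁻¹),
      toolA D D (fun x => x * g⁻¹⁻¹)] at h
    simpa using h
  have e1 := sumMem D D (fun x => x * g)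
  have e2 : (D.filter fun x => x * g ∈ D).card + (Dᶜ.filter fun x => x * g ∈ D).card = D.card := by
    rw [sumCompl D (fun x => x * g ∈ D), toolShift]
  have e3 := sumMem Dᶜ D (fun x => x * g)
  refine ⟨hDD, ?_, ?_, ?_⟩ <;> omega

lemma diagCounts (D : Finset G) :
    (D.filter fun x => x ∈ D).card = D.card ∧
    (D.filter fun x => x ∈ Dᶜ).card = 0 ∧
    (Dᶜ.filter fun x => x ∈ D).card = 0 ∧
    (Dᶜ.filter fun x => x ∈ Dᶜ).card = Dᶜ.card := by
  refine ⟨?_, ?_, ?_, ?_⟩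
  · rw [Finset.filter_mem_eq_inter, Finset.inter_self]
  · rw [Finset.filter_mem_eq_inter]; simp
  · rw [Finset.filter_mem_eq_inter]; simp [Finset.inter_comm]
  · rw [Finset.filter_mem_eq_inter, Finset.inter_self]


lemma deltaCard : ((univ : Finset (G × G)).filter fun p => p.1 = p.2).card = Fintype.card G := by
  rw [← Finset.card_univ]
  apply Finset.card_nbij' (i := fun q => q.1) (j := fun x => (x, x))
  · intro q _; simp
  · intro x _; simp
  · intro q hq
    simp only [mem_coe, mem_filter, mem_univ, true_and] at hq
    exact Prod.ext rfl hq
  · intro x _; rfl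

lemma memE2 {D : Finset G} {p : G × G}
    (hp : p ∈ ((D ×ˢ D).filter fun p => p.1 ≠ p.2) ∪ ((Dᶜ ×ˢ Dᶜ).filter fun p => p.1 ≠ p.2)) :
    p.1 ≠ p.2 ∧ ((p.1 ∈ D ∧ p.2 ∈ D) ∨ (p.1 ∉ D ∧ p.2 ∉ D)) := by
  simp only [mem_union, mem_filter, mem_product, mem_compl] at hp
  tauto

lemma memE2' {D : Finset G} {p : G × G} (h1 : p.1 ≠ p.2)
    (h2 : (p.1 ∈ D ∧ p.2 ∈ D) ∨ (p.1 ∉ D ∧ p.2 ∉ D)) :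
    p ∈ ((D ×ˢ D).filter fun p => p.1 ≠ p.2) ∪ ((Dᶜ ×ˢ Dᶜ).filter fun p => p.1 ≠ p.2) := by
  simp only [mem_union, mem_filter, mem_product, mem_compl]
  tauto

-- cross terms vanish for condition 1
lemma z1a (D : Finset G) (g : G) :
    (((((D ×ˢ D).filter fun p => p.1 ≠ p.2) ∪ ((Dᶜ ×ˢ Dᶜ).filter fun p => p.1 ≠ p.2))
        ×ˢ ((univ : Finset (G × G)).filter fun p => p.1 = p.2)).filter
      fun q => q.1.1⁻¹ * q.2.1 = g ∧ q.1.2⁻¹ * q.2.2 = g).card = 0 := by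
  rw [Finset.card_eq_zero, Finset.filter_eq_empty_iff]
  rintro q hq ⟨h1, h2⟩
  rw [mem_product] at hq
  have hne := (memE2 hq.1).1
  have heq : q.2.1 = q.2.2 := (mem_filter.mp hq.2).2
  apply hne
  apply mul_right_cancel (b := g)
  rw [← (iff2 _ _ _).mp h1, ← (iff2 _ _ _).mp h2, heq]

lemma z1b (D : Finset G) (g : G) :
    (((((univ : Finset (G × G)).filter fun p => p.1 = p.2))
        ×ˢ (((D ×ˢ D).filter fun p => p.1 ≠ p.2) ∪ ((Dᶜ ×ˢ Dᶜ).filter fun p => p.1 ≠ p.2))).filter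
      fun q => q.1.1⁻¹ * q.2.1 = g ∧ q.1.2⁻¹ * q.2.2 = g).card = 0 := by
  rw [Finset.card_eq_zero, Finset.filter_eq_empty_iff]
  rintro q hq ⟨h1, h2⟩
  rw [mem_product] at hq
  have hne := (memE2 hq.2).1
  have heq : q.1.1 = q.1.2 := (mem_filter.mp hq.1).2
  apply hne
  rw [(iff2 _ _ _).mp h1, (iff2 _ _ _).mp h2, heq]

lemma zdd1 (g : G) :
    ((((univ : Finset (G × G)).filter fun p => p.1 = p.2)
        ×ˢ ((univ : Finset (G × G)).filter fun p => p.1 = p.2)).filter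
      fun q => q.1.1⁻¹ * q.2.1 = g ∧ q.1.2⁻¹ * q.2.2 = g).card = Fintype.card G := by
  rw [← Finset.card_univ]
  apply Finset.card_nbij' (i := fun q => q.1.1) (j := fun x => ((x, x), (x * g, x * g)))
  · intro q _; simp
  · intro x _
    simp [inv_mul_cancel_left]
  · rintro ⟨⟨a, b⟩, c, d⟩ hq
    simp only [mem_coe, mem_filter, mem_product, mem_univ, true_and] at hq
    obtain ⟨⟨hab, hcd⟩, h1, h2⟩ := hq
    simp only at hab hcd h1 h2 ⊢
    subst hab hcd
    rw [(iff2 _ _ _).mp h1]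
  · intro x _; rfl

lemma zdd2 (g : G) (hg : g ≠ 1) :
    ((((univ : Finset (G × G)).filter fun p => p.1 = p.2)
        ×ˢ ((univ : Finset (G × G)).filter fun p => p.1 = p.2)).filter
      fun q => q.1.1 * q.2.1⁻¹ = g ∧ q.1.2 = q.2.2).card = 0 := by
  rw [Finset.card_eq_zero, Finset.filter_eq_empty_iff]
  rintro q hq ⟨h1, h2⟩
  rw [mem_product] at hq
  have e1 : q.1.1 = q.1.2 := (mem_filter.mp hq.1).2
  have e2 : q.2.1 = q.2.2 := (mem_filter.mp hq.2).2
  apply hg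
  rw [← h1, e1, h2, ← e2, e2, mul_inv_cancel]

lemma zdd3 (g : G) (hg : g ≠ 1) :
    ((((univ : Finset (G × G)).filter fun p => p.1 = p.2)
        ×ˢ ((univ : Finset (G × G)).filter fun p => p.1 = p.2)).filter
      fun q => q.1.1 = q.2.1 ∧ q.1.2 * q.2.2⁻¹ = g).card = 0 := by
  rw [Finset.card_eq_zero, Finset.filter_eq_empty_iff]
  rintro q hq ⟨h1, h2⟩
  rw [mem_product] at hq
  have e1 : q.1.1 = q.1.2 := (mem_filter.mp hq.1).2
  have e2 : q.2.1 = q.2.2 := (mem_filter.mp hq.2).2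
  apply hg
  rw [← h2, ← e1, h1, e2, mul_inv_cancel]

lemma t2a (D : Finset G) (g : G) (hg : g ≠ 1) :
    (((((D ×ˢ D).filter fun p => p.1 ≠ p.2) ∪ ((Dᶜ ×ˢ Dᶜ).filter fun p => p.1 ≠ p.2))
        ×ˢ ((univ : Finset (G × G)).filter fun p => p.1 = p.2)).filter
      fun q => q.1.1 * q.2.1⁻¹ = g ∧ q.1.2 = q.2.2).card
    = (D.filter fun y => y * g ∈ D).card + (Dᶜ.filter fun y => y * g ∈ Dᶜ).card := by
  rw [← Finset.card_union_of_disjoint (Finset.disjoint_filter_filter disjoint_compl_right)]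
  apply Finset.card_nbij' (i := fun q => q.1.2) (j := fun y => ((y * g, y), (y, y)))
  · rintro ⟨⟨a, b⟩, c, d⟩ hq
    simp only [mem_coe, mem_filter, mem_product, mem_univ, true_and] at hq
    obtain ⟨⟨hE, hcd⟩, h1, h2⟩ := hq
    obtain ⟨-, hside⟩ := memE2 hE
    have hb : b = a * g⁻¹ := by rw [h2, ← hcd, (iff1 _ _ _).mp h1]
    have hkey : b * g = a := by rw [hb, inv_mul_cancel_right]
    simp only [mem_coe, mem_union, mem_filter, mem_compl, hkey]
    tauto
  · intro y hy
    simp only [mem_coe, mem_union, mem_filter, mem_compl] at hy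
    have h1 : y * g ≠ y := fun h => hg (mul_left_cancel (a := y) (by rw [h, mul_one]))
    have h2 := memE2' (p := (y * g, y)) (D := D) h1 (by simp only; tauto)
    refine Finset.mem_filter.mpr ⟨Finset.mem_product.mpr ⟨h2,
      Finset.mem_filter.mpr ⟨Finset.mem_univ _, rfl⟩⟩, ?_, rfl⟩
    show y * g * y⁻¹ = g
    rw [mul_comm y g, mul_inv_cancel_right]
  · rintro ⟨⟨a, b⟩, c, d⟩ hq
    simp only [mem_coe, mem_filter, mem_product, mem_univ, true_and] at hq
    obtain ⟨⟨hE, hcd⟩, h1, h2⟩ := hq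
    have hb : b = a * g⁻¹ := by rw [h2, ← hcd, (iff1 _ _ _).mp h1]
    have hkey : b * g = a := by rw [hb, inv_mul_cancel_right]
    have hc : c = b := by rw [hcd, ← h2]
    show ((b * g, b), b, b) = ((a, b), c, d)
    rw [hkey, hc, ← h2]
  · intro y _; rfl

lemma t2b (D : Finset G) (g : G) (hg : g ≠ 1) :
    ((((univ : Finset (G × G)).filter fun p => p.1 = p.2)
        ×ˢ (((D ×ˢ D).filter fun p => p.1 ≠ p.2) ∪ ((Dᶜ ×ˢ Dᶜ).filter fun p => p.1 ≠ p.2))).filter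
      fun q => q.1.1 * q.2.1⁻¹ = g ∧ q.1.2 = q.2.2).card
    = (D.filter fun x => x * g⁻¹ ∈ D).card + (Dᶜ.filter fun x => x * g⁻¹ ∈ Dᶜ).card := by
  rw [← Finset.card_union_of_disjoint (Finset.disjoint_filter_filter disjoint_compl_right)]
  apply Finset.card_nbij' (i := fun q => q.1.1) (j := fun x => ((x, x), (x * g⁻¹, x)))
  · rintro ⟨⟨a, b⟩, c, d⟩ hq
    simp only [mem_coe, mem_filter, mem_product, mem_univ, true_and] at hq
    obtain ⟨⟨hab, hE⟩, h1, h2⟩ := hq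
    obtain ⟨-, hside⟩ := memE2 hE
    have hc : c = a * g⁻¹ := (iff1 _ _ _).mp h1
    have hd : d = a := by rw [← h2, ← hab]
    rw [hc, hd] at hside
    simp only [mem_coe, mem_union, mem_filter, mem_compl]
    tauto
  · intro x hx
    simp only [mem_coe, mem_union, mem_filter, mem_compl] at hx
    have h1 : x * g⁻¹ ≠ x := fun h =>
      hg (inv_eq_one.mp (mul_left_cancel (a := x) (by rw [h, mul_one])))
    have h2 := memE2' (p := (x * g⁻¹, x)) (D := D) h1 (by simp only; tauto)
    refine Finset.mem_filter.mpr ⟨Finset.mem_product.mpr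
      ⟨Finset.mem_filter.mpr ⟨Finset.mem_univ _, rfl⟩, h2⟩, ?_, rfl⟩
    exact (iff1 x (x * g⁻¹) g).mpr rfl
  · rintro ⟨⟨a, b⟩, c, d⟩ hq
    simp only [mem_coe, mem_filter, mem_product, mem_univ, true_and] at hq
    obtain ⟨⟨hab, hE⟩, h1, h2⟩ := hq
    have hc : c = a * g⁻¹ := (iff1 _ _ _).mp h1
    have hd : d = a := by rw [← h2, ← hab]
    exact Prod.ext (Prod.ext rfl hab) (Prod.ext hc.symm hd.symm)
  · intro x _; rfl

lemma t3a (D : Finset G) (g : G) (hg : g ≠ 1) :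
    (((((D ×ˢ D).filter fun p => p.1 ≠ p.2) ∪ ((Dᶜ ×ˢ Dᶜ).filter fun p => p.1 ≠ p.2))
        ×ˢ ((univ : Finset (G × G)).filter fun p => p.1 = p.2)).filter
      fun q => q.1.1 = q.2.1 ∧ q.1.2 * q.2.2⁻¹ = g).card
    = (D.filter fun x => x * g ∈ D).card + (Dᶜ.filter fun x => x * g ∈ Dᶜ).card := by
  rw [← Finset.card_union_of_disjoint (Finset.disjoint_filter_filter disjoint_compl_right)]
  apply Finset.card_nbij' (i := fun q => q.1.1) (j := fun x => ((x, x * g), (x, x)))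
  · rintro ⟨⟨a, b⟩, c, d⟩ hq
    simp only [mem_coe, mem_filter, mem_product, mem_univ, true_and] at hq
    obtain ⟨⟨hE, hcd⟩, h1, h2⟩ := hq
    obtain ⟨-, hside⟩ := memE2 hE
    have hd : d = b * g⁻¹ := (iff1 _ _ _).mp h2
    have hb : b = a * g := by
      have ha : a = b * g⁻¹ := by rw [h1, hcd, hd]
      exact (eq_mul_inv_iff_mul_eq.mp ha).symm
    rw [hb] at hside
    simp only [mem_coe, mem_union, mem_filter, mem_compl]
    tauto
  · intro x hx
    simp only [mem_coe, mem_union, mem_filter, mem_compl] at hx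
    have h1 : x ≠ x * g := fun h => hg (left_eq_mul.mp h)
    have h2 := memE2' (p := (x, x * g)) (D := D) h1 (by simp only; tauto)
    refine Finset.mem_filter.mpr ⟨Finset.mem_product.mpr
      ⟨h2, Finset.mem_filter.mpr ⟨Finset.mem_univ _, rfl⟩⟩, rfl, ?_⟩
    show x * g * x⁻¹ = g
    rw [mul_comm x g, mul_inv_cancel_right]
  · rintro ⟨⟨a, b⟩, c, d⟩ hq
    simp only [mem_coe, mem_filter, mem_product, mem_univ, true_and] at hq
    obtain ⟨⟨hE, hcd⟩, h1, h2⟩ := hq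
    have hd : d = b * g⁻¹ := (iff1 _ _ _).mp h2
    have hb : b = a * g := by
      have ha : a = b * g⁻¹ := by rw [h1, hcd, hd]
      exact (eq_mul_inv_iff_mul_eq.mp ha).symm
    exact Prod.ext (Prod.ext rfl hb.symm) (Prod.ext h1 (h1.trans hcd))
  · intro x _; rfl

lemma t3b (D : Finset G) (g : G) (hg : g ≠ 1) :
    ((((univ : Finset (G × G)).filter fun p => p.1 = p.2)
        ×ˢ (((D ×ˢ D).filter fun p => p.1 ≠ p.2) ∪ ((Dᶜ ×ˢ Dᶜ).filter fun p => p.1 ≠ p.2))).filter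
      fun q => q.1.1 = q.2.1 ∧ q.1.2 * q.2.2⁻¹ = g).card
    = (D.filter fun x => x * g⁻¹ ∈ D).card + (Dᶜ.filter fun x => x * g⁻¹ ∈ Dᶜ).card := by
  rw [← Finset.card_union_of_disjoint (Finset.disjoint_filter_filter disjoint_compl_right)]
  apply Finset.card_nbij' (i := fun q => q.1.1) (j := fun x => ((x, x), (x, x * g⁻¹)))
  · rintro ⟨⟨a, b⟩, c, d⟩ hq
    simp only [mem_coe, mem_filter, mem_product, mem_univ, true_and] at hq
    obtain ⟨⟨hab, hE⟩, h1, h2⟩ := hq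
    obtain ⟨-, hside⟩ := memE2 hE
    have hd : d = a * g⁻¹ := by rw [(iff1 _ _ _).mp h2, ← hab]
    rw [hd, ← h1] at hside
    simp only [mem_coe, mem_union, mem_filter, mem_compl]
    tauto
  · intro x hx
    simp only [mem_coe, mem_union, mem_filter, mem_compl] at hx
    have h1 : x ≠ x * g⁻¹ := fun h => hg (inv_eq_one.mp (left_eq_mul.mp h))
    have h2 := memE2' (p := (x, x * g⁻¹)) (D := D) h1 (by simp only; tauto)
    refine Finset.mem_filter.mpr ⟨Finset.mem_product.mpr
      ⟨Finset.mem_filter.mpr ⟨Finset.mem_univ _, rfl⟩, h2⟩, rfl, ?_⟩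
    exact (iff1 x (x * g⁻¹) g).mpr rfl
  · rintro ⟨⟨a, b⟩, c, d⟩ hq
    simp only [mem_coe, mem_filter, mem_product, mem_univ, true_and] at hq
    obtain ⟨⟨hab, hE⟩, h1, h2⟩ := hq
    have hd : d = a * g⁻¹ := by rw [(iff1 _ _ _).mp h2, ← hab]
    exact Prod.ext (Prod.ext rfl hab) (Prod.ext h1 hd.symm)
  · intro x _; rfl

lemma splitE (D : Finset G) :
    (D ×ˢ D) ∪ (Dᶜ ×ˢ Dᶜ)
      = (((D ×ˢ D).filter fun p => p.1 ≠ p.2) ∪ ((Dᶜ ×ˢ Dᶜ).filter fun p => p.1 ≠ p.2))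
        ∪ ((univ : Finset (G × G)).filter fun p => p.1 = p.2) := by
  ext ⟨x, y⟩
  simp only [mem_union, mem_filter, mem_product, mem_compl, mem_univ, true_and]
  by_cases h : x = y
  · subst h; tauto
  · tauto

lemma disjE2D (D : Finset G) :
    Disjoint (((D ×ˢ D).filter fun p => p.1 ≠ p.2) ∪ ((Dᶜ ×ˢ Dᶜ).filter fun p => p.1 ≠ p.2))
      ((univ : Finset (G × G)).filter fun p => p.1 = p.2) := by
  simp only [Finset.disjoint_left, mem_union, mem_filter, mem_product, mem_compl, mem_univ,
    true_and]
  rintro p hp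
  tauto

end Tools

open Finset in
theorem stmt14 {G : Type*} [CommGroup G] [Fintype G] [DecidableEq G]
    (n : ℕ) (hn : 0 < n) (D : Finset G)
    (hD : IsDiffSet G (4 * n ^ 2) (2 * n ^ 2 - n) (n ^ 2 - n) D) :
    IsPropDS3 G (4 * n ^ 2) (2 * n ^ 2 * (4 * n ^ 2 + 1)) (2 * n ^ 2 * (2 * n ^ 2 + 1))
      ((D ×ˢ D) ∪ (Dᶜ ×ˢ Dᶜ)) ∧
    IsPropDS3 G (4 * n ^ 2) (2 * n ^ 2 * (4 * n ^ 2 - 1)) (2 * n ^ 2 * (2 * n ^ 2 - 1))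
      (((D ×ˢ D).filter fun p => p.1 ≠ p.2) ∪ ((Dᶜ ×ˢ Dᶜ).filter fun p => p.1 ≠ p.2)) ∧
    IsPropDS3 G (4 * n ^ 2) (2 * n ^ 2 * (4 * n ^ 2 - 1)) (2 * n ^ 2 * (2 * n ^ 2 - 1))
      ((D ×ˢ Dᶜ) ∪ (Dᶜ ×ˢ D)) := by
  obtain ⟨hv, hk, hlam⟩ := hD
  have hnm : n ≤ n ^ 2 := Nat.le_self_pow two_ne_zero n
  have h1n : 1 ≤ n ^ 2 := by nlinarith
  have h2n : n ≤ 2 * n ^ 2 := by omega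
  have h12 : 1 ≤ 2 * n ^ 2 := by omega
  have h14 : 1 ≤ 4 * n ^ 2 := by omega
  have hkc : Dᶜ.card = 2 * n ^ 2 + n := by rw [Finset.card_compl, hv, hk]; omega
  have d1 : Disjoint (D ×ˢ D) (Dᶜ ×ˢ Dᶜ) := by
    simp only [Finset.disjoint_left, mem_product, mem_compl]; tauto
  have d3 : Disjoint (D ×ˢ Dᶜ) (Dᶜ ×ˢ D) := by
    simp only [Finset.disjoint_left, mem_product, mem_compl]; tauto
  obtain ⟨dd1, dd2, dd3, dd4⟩ := diagCounts D
  have H1 : ∀ g : G, g ≠ 1 → ((((D ×ˢ D) ∪ (Dᶜ ×ˢ Dᶜ)) ×ˢ ((D ×ˢ D) ∪ (Dᶜ ×ˢ Dᶜ))).filter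
      fun p => p.1.1⁻¹ * p.2.1 = g ∧ p.1.2⁻¹ * p.2.2 = g).card
        = 2 * n ^ 2 * (2 * n ^ 2 + 1) := by
    intro g hg
    rw [toolU _ _ d1 (fun a b => a.1⁻¹ * b.1 = g ∧ a.2⁻¹ * b.2 = g), TC1, TC1, TC1, TC1]
    obtain ⟨c1, c2, c3, c4⟩ := counts D n hv hk hlam hn g hg
    rw [c1, c2, c3, c4]
    zify [hnm]; ring
  have H2 : ∀ g : G, g ≠ 1 → ((((D ×ˢ D) ∪ (Dᶜ ×ˢ Dᶜ)) ×ˢ ((D ×ˢ D) ∪ (Dᶜ ×ˢ Dᶜ))).filter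
      fun p => p.1.1 * p.2.1⁻¹ = g ∧ p.1.2 = p.2.2).card
        = 2 * n ^ 2 * (2 * n ^ 2 + 1) := by
    intro g hg
    rw [toolU _ _ d1 (fun a b => a.1 * b.1⁻¹ = g ∧ a.2 = b.2), TC2, TC2, TC2, TC2]
    obtain ⟨b1, b2, b3, b4⟩ := counts D n hv hk hlam hn g⁻¹ (inv_ne_one.mpr hg)
    rw [b1, b2, b3, b4, dd1, dd2, dd3, dd4, hk, hkc]
    zify [hnm, h2n]; ring
  have H3 : ∀ g : G, g ≠ 1 → ((((D ×ˢ D) ∪ (Dᶜ ×ˢ Dᶜ)) ×ˢ ((D ×ˢ D) ∪ (Dᶜ ×ˢ Dᶜ))).filter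
      fun p => p.1.1 = p.2.1 ∧ p.1.2 * p.2.2⁻¹ = g).card
        = 2 * n ^ 2 * (2 * n ^ 2 + 1) := by
    intro g hg
    rw [toolU _ _ d1 (fun a b => a.1 = b.1 ∧ a.2 * b.2⁻¹ = g), TC3, TC3, TC3, TC3]
    obtain ⟨b1, b2, b3, b4⟩ := counts D n hv hk hlam hn g⁻¹ (inv_ne_one.mpr hg)
    rw [b1, b2, b3, b4, dd1, dd2, dd3, dd4, hk, hkc]
    zify [hnm, h2n]; ring
  have hE1card : ((D ×ˢ D) ∪ (Dᶜ ×ˢ Dᶜ)).card = 2 * n ^ 2 * (4 * n ^ 2 + 1) := by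
    rw [Finset.card_union_of_disjoint d1, Finset.card_product, Finset.card_product, hk, hkc]
    zify [h2n]; ring
  refine ⟨⟨hv, hE1card, fun g hg => ⟨H1 g hg, H2 g hg, H3 g hg⟩⟩,
    ⟨hv, ?_, fun g hg => ⟨?_, ?_, ?_⟩⟩, ⟨hv, ?_, fun g hg => ⟨?_, ?_, ?_⟩⟩⟩
  · -- part 2 cardinality
    have h := Finset.card_union_of_disjoint (disjE2D D)
    rw [← splitE D, hE1card, deltaCard, hv] at h
    have hz : 2 * n ^ 2 * (4 * n ^ 2 + 1) = 2 * n ^ 2 * (4 * n ^ 2 - 1) + 4 * n ^ 2 := by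
      zify [h14]; ring
    linarith [h, hz]
  · -- part 2 condition 1
    have hU := toolU _ _ (disjE2D D) (fun a b => a.1⁻¹ * b.1 = g ∧ a.2⁻¹ * b.2 = g)
    rw [← splitE D, H1 g hg, z1a, z1b, zdd1, hv] at hU
    have hz : 2 * n ^ 2 * (2 * n ^ 2 + 1) = 2 * n ^ 2 * (2 * n ^ 2 - 1) + 4 * n ^ 2 := by
      zify [h12]; ring
    linarith [hU, hz]
  · -- part 2 condition 2
    have hU := toolU _ _ (disjE2D D) (fun a b => a.1 * b.1⁻¹ = g ∧ a.2 = b.2)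
    obtain ⟨c1, -, -, c4⟩ := counts D n hv hk hlam hn g hg
    obtain ⟨b1, -, -, b4⟩ := counts D n hv hk hlam hn g⁻¹ (inv_ne_one.mpr hg)
    rw [← splitE D, H2 g hg, t2a D g hg, t2b D g hg, zdd2 g hg, c1, c4, b1, b4] at hU
    have hz : 2 * n ^ 2 * (2 * n ^ 2 + 1)
        = 2 * n ^ 2 * (2 * n ^ 2 - 1) + ((n ^ 2 - n) + (n ^ 2 + n))
          + ((n ^ 2 - n) + (n ^ 2 + n)) := by
      zify [h12, hnm]; ring
    linarith [hU, hz]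
  · -- part 2 condition 3
    have hU := toolU _ _ (disjE2D D) (fun a b => a.1 = b.1 ∧ a.2 * b.2⁻¹ = g)
    obtain ⟨c1, -, -, c4⟩ := counts D n hv hk hlam hn g hg
    obtain ⟨b1, -, -, b4⟩ := counts D n hv hk hlam hn g⁻¹ (inv_ne_one.mpr hg)
    rw [← splitE D, H3 g hg, t3a D g hg, t3b D g hg, zdd3 g hg, c1, c4, b1, b4] at hU
    have hz : 2 * n ^ 2 * (2 * n ^ 2 + 1)
        = 2 * n ^ 2 * (2 * n ^ 2 - 1) + ((n ^ 2 - n) + (n ^ 2 + n))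
          + ((n ^ 2 - n) + (n ^ 2 + n)) := by
      zify [h12, hnm]; ring
    linarith [hU, hz]
  · -- part 3 cardinality
    rw [Finset.card_union_of_disjoint d3, Finset.card_product, Finset.card_product, hk, hkc]
    zify [h2n, h14]; ring
  · -- part 3 condition 1
    rw [toolU _ _ d3 (fun a b => a.1⁻¹ * b.1 = g ∧ a.2⁻¹ * b.2 = g), TC1, TC1, TC1, TC1]
    obtain ⟨c1, c2, c3, c4⟩ := counts D n hv hk hlam hn g hg
    rw [c1, c2, c3, c4]
    zify [hnm, h12]; ring
  · -- part 3 condition 2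
    rw [toolU _ _ d3 (fun a b => a.1 * b.1⁻¹ = g ∧ a.2 = b.2), TC2, TC2, TC2, TC2]
    obtain ⟨b1, b2, b3, b4⟩ := counts D n hv hk hlam hn g⁻¹ (inv_ne_one.mpr hg)
    rw [b1, b2, b3, b4, dd1, dd2, dd3, dd4, hk, hkc]
    zify [hnm, h2n, h12]; ring
  · -- part 3 condition 3
    rw [toolU _ _ d3 (fun a b => a.1 = b.1 ∧ a.2 * b.2⁻¹ = g), TC3, TC3, TC3, TC3]
    obtain ⟨b1, b2, b3, b4⟩ := counts D n hv hk hlam hn g⁻¹ (inv_ne_one.mpr hg)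
    rw [b1, b2, b3, b4, dd1, dd2, dd3, dd4, hk, hkc]
    zify [hnm, h2n, h12]; ring
end
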